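/- Let q and p be probability mass functions on ℕ with positive tail probabilities, and for each t define Bernoulli distributions q_{Δ_t} and p_{Δ_t} with success probabilities h^q_t = q(T=t | T ≥ t) and h^p_t = p(T=t | T ≥ t), respectively. Then the Kullback–Leibler divergence from q to p decomposes as D_KL(q ‖ p) = ∑_{t=0}^∞ q(T ≥ t) · D_KL(Bernoulli(h^q_t) ‖ Bernoulli(h^p_t)). -/

import Mathlib

open Real Filter Finset Topology

lemma log_ge (x : ℝ) (hx : 0 < x) : 1 - 1/x ≤ Real.log x := by
  have h := Real.log_le_sub_one_of_pos (x := 1/x) (by positivity)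
  rw [Real.log_div one_ne_zero hx.ne'] at h
  rw [one_div] at *
  simp at h; linarith

lemma key_id (qt pt Q' P' : ℝ) (hqt : 0 < qt) (hpt : 0 < pt) (hQ' : 0 < Q') (hP' : 0 < P') :
    (qt + Q') * ((qt/(qt+Q')) * Real.log ((qt/(qt+Q'))/(pt/(pt+P'))) +
      (1 - qt/(qt+Q')) * Real.log ((1 - qt/(qt+Q'))/(1 - pt/(pt+P'))))
    = qt * Real.log (qt/pt) + (Q' * Real.log (Q'/P') - (qt+Q') * Real.log ((qt+Q')/(pt+P'))) := by
  have hQ : (0:ℝ) < qt + Q' := by linarith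
  have hP : (0:ℝ) < pt + P' := by linarith
  have h1 : 1 - qt/(qt+Q') = Q'/(qt+Q') := by field_simp; ring
  have h2 : 1 - pt/(pt+P') = P'/(pt+P') := by field_simp; ring
  have e1 : Real.log ((qt/(qt+Q'))/(pt/(pt+P')))
      = Real.log qt - Real.log (qt+Q') - (Real.log pt - Real.log (pt+P')) := by
    rw [Real.log_div (by positivity) (by positivity), Real.log_div hqt.ne' hQ.ne',
      Real.log_div hpt.ne' hP.ne']
  have e2 : Real.log ((Q'/(qt+Q'))/(P'/(pt+P')))
      = Real.log Q' - Real.log (qt+Q') - (Real.log P' - Real.log (pt+P')) := by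
    rw [Real.log_div (by positivity) (by positivity), Real.log_div hQ'.ne' hQ.ne',
      Real.log_div hP'.ne' hP.ne']
  rw [h1, h2, e1, e2, Real.log_div hqt.ne' hpt.ne', Real.log_div hQ'.ne' hP'.ne',
    Real.log_div hQ.ne' hP.ne']
  field_simp
  ring

/-- KL divergence between pmfs on ℕ decomposes into tail-weighted
Bernoulli KL divergences of the hazard rates. -/
theorem kl_eq_sum_tail_bernoulli_kl
    (q p tq tp : ℕ → ℝ)
    (hq0 : ∀ t, 0 < q t) (hp0 : ∀ t, 0 < p t)
    (hqsum : ∑' t, q t = 1) (hpsum : ∑' t, p t = 1)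
    (htq : ∀ t, tq t = ∑' i, q (t + i)) (htp : ∀ t, tp t = ∑' i, p (t + i))
    (htqpos : ∀ t, 0 < tq t) (htppos : ∀ t, 0 < tp t)
    (hsum1 : Summable (fun t => q t * Real.log (q t / p t)))
    (hsum2 : Summable (fun t => tq t *
      ((q t / tq t) * Real.log ((q t / tq t) / (p t / tp t)) +
       (1 - q t / tq t) * Real.log ((1 - q t / tq t) / (1 - p t / tp t))))) :
    ∑' t, q t * Real.log (q t / p t)
      = ∑' t, tq t *
          ((q t / tq t) * Real.log ((q t / tq t) / (p t / tp t)) +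
           (1 - q t / tq t) * Real.log ((1 - q t / tq t) / (1 - p t / tp t))) := by
  set a : ℕ → ℝ := fun t => q t * Real.log (q t / p t) with ha
  set g : ℕ → ℝ := fun t => tq t *
      ((q t / tq t) * Real.log ((q t / tq t) / (p t / tp t)) +
       (1 - q t / tq t) * Real.log ((1 - q t / tq t) / (1 - p t / tp t))) with hg
  set F : ℕ → ℝ := fun N => tq N * Real.log (tq N / tp N) with hF
  -- summability of q and p
  have hqs : Summable q := by
    by_contra hc; rw [tsum_eq_zero_of_not_summable hc] at hqsum; norm_num at hqsum
  have hps : Summable p := by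
    by_contra hc; rw [tsum_eq_zero_of_not_summable hc] at hpsum; norm_num at hpsum
  have tailq : ∀ N, Summable (fun i => q (N + i)) :=
    fun N => hqs.comp_injective (add_right_injective N)
  have tailp : ∀ N, Summable (fun i => p (N + i)) :=
    fun N => hps.comp_injective (add_right_injective N)
  -- recurrence
  have rec_q : ∀ t, tq t = q t + tq (t + 1) := by
    intro t
    rw [htq t, htq (t + 1), Summable.tsum_eq_zero_add (tailq t)]
    congr 1
    exact tsum_congr fun b => by rw [show t + (b + 1) = (t + 1) + b by omega]
  have rec_p : ∀ t, tp t = p t + tp (t + 1) := by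
    intro t
    rw [htp t, htp (t + 1), Summable.tsum_eq_zero_add (tailp t)]
    congr 1
    exact tsum_congr fun b => by rw [show t + (b + 1) = (t + 1) + b by omega]
  -- per-term identity
  have ident : ∀ t, g t = a t + (F (t + 1) - F t) := by
    intro t
    show tq t * _ = q t * _ + (tq (t+1) * Real.log (tq (t+1) / tp (t+1)) - tq t * Real.log (tq t / tp t))
    rw [rec_q t, rec_p t]
    exact key_id (q t) (p t) (tq (t+1)) (tp (t+1)) (hq0 t) (hp0 t) (htqpos (t+1)) (htppos (t+1))
  -- summability of the telescoping part
  have hd : Summable (fun t => F (t + 1) - F t) := by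
    have : (fun t => F (t + 1) - F t) = fun t => g t - a t := by
      funext t; rw [ident t]; ring
    rw [this]; exact hsum2.sub hsum1
  -- tails tend to zero
  have htq_to : Tendsto tq atTop (𝓝 0) := by
    refine (tendsto_sum_nat_add q).congr fun N => ?_
    rw [htq N]; exact tsum_congr fun k => by rw [add_comm]
  have htp_to : Tendsto tp atTop (𝓝 0) := by
    refine (tendsto_sum_nat_add p).congr fun N => ?_
    rw [htp N]; exact tsum_congr fun k => by rw [add_comm]
  have taila_to : Tendsto (fun N => ∑' i, a (N + i)) atTop (𝓝 0) := by
    refine (tendsto_sum_nat_add a).congr fun N => ?_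
    exact tsum_congr fun k => by rw [add_comm]
  -- lower bound
  have lower : ∀ N, tq N - tp N ≤ F N := by
    intro N
    have h1 : 1 - tp N / tq N ≤ Real.log (tq N / tp N) := by
      have := log_ge (tq N / tp N) (div_pos (htqpos N) (htppos N))
      rwa [one_div_div] at this
    have e : tq N * (1 - tp N / tq N) = tq N - tp N := by
      field_simp [(htqpos N).ne']
    have := mul_le_mul_of_nonneg_left h1 (htqpos N).le
    simp only [hF]; linarith
  -- upper bound : F N ≤ tail of a
  have upper : ∀ N, F N ≤ ∑' i, a (N + i) := by
    intro N
    set c : ℝ := tq N / tp N with hc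
    set L : ℝ := Real.log (tq N / tp N) with hL
    have hcpos : 0 < c := div_pos (htqpos N) (htppos N)
    have point : ∀ i, q (N + i) * L + (q (N + i) - p (N + i) * c) ≤ a (N + i) := by
      intro i
      set j := N + i
      have hX : (0:ℝ) < (q j / p j) / c := div_pos (div_pos (hq0 j) (hp0 j)) hcpos
      have hlog : Real.log ((q j / p j) / c) = Real.log (q j / p j) - L := by
        rw [Real.log_div (div_pos (hq0 j) (hp0 j)).ne' hcpos.ne']
      have hge := log_ge _ hX
      have e : q j * (1 - 1 / ((q j / p j) / c)) = q j - p j * c := by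
        have hqj := (hq0 j).ne'
        have hpj := (hp0 j).ne'
        rw [one_div_div]
        field_simp
      have := mul_le_mul_of_nonneg_left hge (hq0 j).le
      rw [e, hlog] at this
      simp only [ha]
      nlinarith [this]
    have S1 : Summable (fun i => a (N + i)) := hsum1.comp_injective (add_right_injective N)
    have S2 : Summable (fun i => q (N + i) * L + (q (N + i) - p (N + i) * c)) :=
      (((tailq N).mul_right L).add ((tailq N).sub ((tailp N).mul_right c)))
    have hle := Summable.tsum_le_tsum point S2 S1
    have hqt : ∑' i, q (N + i) = tq N := (htq N).symm
    have hpt : ∑' i, p (N + i) = tp N := (htp N).symm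
    have e2 : ∑' i, (q (N + i) * L + (q (N + i) - p (N + i) * c)) = F N := by
      rw [Summable.tsum_add ((tailq N).mul_right L) ((tailq N).sub ((tailp N).mul_right c)),
        Summable.tsum_sub (tailq N) ((tailp N).mul_right c), tsum_mul_right, tsum_mul_right,
        hqt, hpt]
      have : tp N * c = tq N := by rw [hc]; field_simp [(htppos N).ne']
      rw [this]; simp [hF, hL]
    rwa [e2] at hle
  -- F tends to 0
  have hFto : Tendsto F atTop (𝓝 0) := by
    refine tendsto_of_tendsto_of_tendsto_of_le_of_le ?_ taila_to lower upper
    simpa using htq_to.sub htp_to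
  -- F 0 = 0
  have hq1 : tq 0 = 1 := by rw [htq 0]; simpa using hqsum
  have hp1 : tp 0 = 1 := by rw [htp 0]; simpa using hpsum
  have hF0 : F 0 = 0 := by simp [hF, hq1, hp1]
  -- sum of telescoping part is 0
  have hd0 : Tendsto (fun N => ∑ i ∈ range N, (F (i + 1) - F i)) atTop (𝓝 0) := by
    refine hFto.congr fun N => ?_
    rw [Finset.sum_range_sub F, hF0, sub_zero]
  have tsum_d : ∑' t, (F (t + 1) - F t) = 0 :=
    tendsto_nhds_unique hd.hasSum.tendsto_sum_nat hd0
  -- conclude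
  calc ∑' t, a t = ∑' t, a t + ∑' t, (F (t + 1) - F t) := by rw [tsum_d, add_zero]
    _ = ∑' t, (a t + (F (t + 1) - F t)) := (Summable.tsum_add hsum1 hd).symm
    _ = ∑' t, g t := tsum_congr fun t => (ident t).symm
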